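/- In the braid group B_n, for 1 ≤ r < p < q ≤ n, the quotient a_{p,q}^{−1} a_{r,q} equals δ_{p,q−1} δ_{r,p−1} a_{p−1,q} δ_{r,q−1}^{−1}, and hence is σ_{q−1}-positive. -/

import Mathlib

/-- Relations of the braid group `B_n` on generators `σ_1, …, σ_{n-1}`
(indexed by natural numbers; the generators of index `0` or `≥ n` are killed,
so that the presented group is exactly `B_n`). -/
def braidRels (n : ℕ) : Set (FreeGroup ℕ) :=
  {r | (∃ i j : ℕ, 1 ≤ i ∧ i + 2 ≤ j ∧ j ≤ n - 1 ∧
          r = FreeGroup.of i * FreeGroup.of j * (FreeGroup.of i)⁻¹ * (FreeGroup.of j)⁻¹) ∨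
       (∃ i : ℕ, 1 ≤ i ∧ i + 1 ≤ n - 1 ∧
          r = FreeGroup.of i * FreeGroup.of (i + 1) * FreeGroup.of i *
              (FreeGroup.of (i + 1) * FreeGroup.of i * FreeGroup.of (i + 1))⁻¹) ∨
       (∃ i : ℕ, (i = 0 ∨ n ≤ i) ∧ r = FreeGroup.of i)}

/-- The braid group `B_n`. -/
def BraidGroup (n : ℕ) : Type := PresentedGroup (braidRels n)

instance (n : ℕ) : Group (BraidGroup n) := by unfold BraidGroup; infer_instance

/-- The Artin generator `σ_i` of `B_n` (nontrivial for `1 ≤ i ≤ n-1`). -/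
def σ (n i : ℕ) : BraidGroup n := PresentedGroup.of i

/-- `δ_{p,q} = σ_p σ_{p+1} ⋯ σ_{q-1}` (equal to `1` when `q ≤ p`). -/
def δδ (n p q : ℕ) : BraidGroup n :=
  ((List.range (q - p)).map (fun k => σ n (p + k))).prod

/-- The Birman–Ko–Lee generator
`a_{p,q} = σ_p ⋯ σ_{q-2} σ_{q-1} σ_{q-2}⁻¹ ⋯ σ_p⁻¹ = δ_{p,q-1} σ_{q-1} δ_{p,q-1}⁻¹`. -/
def a (n p q : ℕ) : BraidGroup n :=
  δδ n p (q - 1) * σ n (q - 1) * (δδ n p (q - 1))⁻¹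

/-- A braid of `B_n` is `σ_i`-positive if it is represented by a word in the
letters `σ_j^{±1}` containing at least one `σ_i`, no `σ_i⁻¹`,
and no letter `σ_j^{±1}` with `j > i`. -/
def SigmaPositive (n i : ℕ) (β : BraidGroup n) : Prop :=
  ∃ w : List (ℕ × Bool),
    ((w.map (fun l => if l.2 then σ n l.1 else (σ n l.1)⁻¹)).prod = β) ∧
    (i, true) ∈ w ∧ (i, false) ∉ w ∧ ∀ l ∈ w, l.1 ≤ i

lemma rel_one {n : ℕ} {g : FreeGroup ℕ} (h : g ∈ braidRels n) :
    (PresentedGroup.mk (braidRels n) g : BraidGroup n) = 1 := by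
  unfold PresentedGroup.mk
  show ((QuotientGroup.mk g : PresentedGroup (braidRels n)) = 1)
  rw [QuotientGroup.eq_one_iff]
  exact Subgroup.subset_normalClosure h

lemma sigma_eq_mk (n i : ℕ) : σ n i = PresentedGroup.mk (braidRels n) (FreeGroup.of i) := rfl

lemma sigma_triv {n i : ℕ} (h : i = 0 ∨ n ≤ i) : σ n i = 1 := by
  rw [sigma_eq_mk]
  exact rel_one (Or.inr (Or.inr ⟨i, h, rfl⟩))

lemma braid_comm (n : ℕ) {i j : ℕ} (h : i + 2 ≤ j) : σ n i * σ n j = σ n j * σ n i := by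
  rcases Nat.eq_zero_or_pos i with hi | hi
  · subst hi; rw [sigma_triv (Or.inl rfl)]; group
  rcases le_or_gt n j with hj | hj
  · rw [sigma_triv (Or.inr hj)]; group
  have := rel_one (n := n) (Or.inl ⟨i, j, hi, h, by omega, rfl⟩)
  simp only [map_mul, map_inv, ← sigma_eq_mk] at this
  have h2 : σ n i * σ n j * (σ n i)⁻¹ * (σ n j)⁻¹ = 1 := this
  have h3 : σ n i * σ n j = (σ n i * σ n j * (σ n i)⁻¹ * (σ n j)⁻¹) * (σ n j * σ n i) := by group
  rw [h3, h2, one_mul]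

lemma braid_rel (n : ℕ) {i : ℕ} (hi : 1 ≤ i) (hn : i + 2 ≤ n) :
    σ n i * σ n (i+1) * σ n i = σ n (i+1) * σ n i * σ n (i+1) := by
  have := rel_one (n := n) (Or.inr (Or.inl ⟨i, hi, by omega, rfl⟩))
  simp only [map_mul, map_inv, ← sigma_eq_mk] at this
  have h2 : σ n i * σ n (i+1) * σ n i * (σ n (i+1) * σ n i * σ n (i+1))⁻¹ = 1 := this
  rw [mul_inv_eq_one] at h2
  exact h2

lemma δδ_eq_one {n p q : ℕ} (h : q ≤ p) : δδ n p q = 1 := by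
  unfold δδ; rw [Nat.sub_eq_zero_of_le h]; simp

lemma δδ_succ {n p q : ℕ} (h : p ≤ q) : δδ n p (q+1) = δδ n p q * σ n q := by
  unfold δδ
  rw [show q + 1 - p = (q - p) + 1 by omega, List.range_succ, List.map_append, List.prod_append]
  simp [show p + (q - p) = q by omega]

lemma δδ_single (n p : ℕ) : δδ n p (p+1) = σ n p := by
  rw [δδ_succ le_rfl, δδ_eq_one le_rfl, one_mul]

lemma δδ_split {n p s q : ℕ} (h1 : p ≤ s) (h2 : s ≤ q) :
    δδ n p s * δδ n s q = δδ n p q := by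
  induction q, h2 using Nat.le_induction with
  | base => rw [δδ_eq_one le_rfl, mul_one]
  | succ q hq ih =>
      rw [δδ_succ hq, δδ_succ (le_trans h1 hq), ← mul_assoc, ih]

lemma δδ_cons {n p q : ℕ} (h : p < q) : δδ n p q = σ n p * δδ n (p+1) q := by
  rw [← δδ_single n p, δδ_split (Nat.le_succ p) h]

lemma σ_comm_δδ {n i p q : ℕ} (h : q + 1 ≤ i) : σ n i * δδ n p q = δδ n p q * σ n i := by
  induction q with
  | zero => rw [δδ_eq_one (Nat.zero_le p)]; group
  | succ q ih =>
      rcases le_or_gt (q+1) p with hp | hp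
      · rw [δδ_eq_one hp]; group
      · rw [δδ_succ (by omega), ← mul_assoc, ih (by omega), mul_assoc,
          ← braid_comm n (by omega : q + 2 ≤ i), mul_assoc]

lemma δδ_comm_σ {n i p q : ℕ} (h : i + 2 ≤ p) : σ n i * δδ n p q = δδ n p q * σ n i := by
  induction q with
  | zero => rw [δδ_eq_one (Nat.zero_le p)]; group
  | succ q ih =>
      rcases le_or_gt (q+1) p with hp | hp
      · rw [δδ_eq_one hp]; group
      · rw [δδ_succ (by omega), ← mul_assoc, ih, mul_assoc,
          braid_comm n (by omega : i + 2 ≤ q), ← mul_assoc]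

lemma shift {n r s i : ℕ} (hr : 1 ≤ r) (hri : r ≤ i) (his : i + 2 ≤ s) (hs : s ≤ n) :
    δδ n r s * σ n i = σ n (i+1) * δδ n r s := by
  have hd : δδ n r s = δδ n r i * (σ n i * (σ n (i+1) * δδ n (i+2) s)) := by
    rw [← δδ_cons (by omega : i + 1 < s), ← δδ_cons (by omega : i < s),
      δδ_split hri (by omega)]
  have c1 : δδ n (i+2) s * σ n i = σ n i * δδ n (i+2) s := (δδ_comm_σ le_rfl).symm
  have c2 : σ n (i+1) * δδ n r i = δδ n r i * σ n (i+1) := σ_comm_δδ (by omega)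
  have b : σ n i * σ n (i+1) * σ n i = σ n (i+1) * σ n i * σ n (i+1) :=
    braid_rel n (by omega) (by omega)
  calc δδ n r s * σ n i
      = δδ n r i * (σ n i * σ n (i+1)) * (δδ n (i+2) s * σ n i) := by rw [hd]; group
    _ = δδ n r i * (σ n i * σ n (i+1) * σ n i) * δδ n (i+2) s := by rw [c1]; group
    _ = δδ n r i * (σ n (i+1) * σ n i * σ n (i+1)) * δδ n (i+2) s := by rw [b]
    _ = (σ n (i+1) * δδ n r i) * (σ n i * (σ n (i+1) * δδ n (i+2) s)) := by rw [c2]; group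
    _ = σ n (i+1) * δδ n r s := by rw [hd]; group

lemma shift_prod {n r s a : ℕ} (hr : 1 ≤ r) (ha : r ≤ a) (hs : s ≤ n) :
    ∀ b, b + 1 ≤ s → δδ n r s * δδ n a b = δδ n (a+1) (b+1) * δδ n r s := by
  intro b
  induction b with
  | zero => intro _; rw [δδ_eq_one (Nat.zero_le a), δδ_eq_one (by omega : 1 ≤ a + 1)]; group
  | succ b ih =>
      intro hb
      rcases le_or_gt (b+1) a with hba | hba
      · rw [δδ_eq_one hba, δδ_eq_one (by omega : b + 2 ≤ a + 1)]; group
      · rw [δδ_succ (by omega : a ≤ b), ← mul_assoc, ih (by omega), mul_assoc,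
          shift hr (by omega) (by omega) hs, ← mul_assoc,
          ← δδ_succ (by omega : a + 1 ≤ b + 1)]

/-- Auxiliary: evaluate a word. -/
def wordProd (n : ℕ) (w : List (ℕ × Bool)) : BraidGroup n :=
  (w.map (fun l => if l.2 then σ n l.1 else (σ n l.1)⁻¹)).prod

def posW (p q : ℕ) : List (ℕ × Bool) := (List.range (q-p)).map (fun k => (p+k, true))
def negW (p q : ℕ) : List (ℕ × Bool) := ((List.range (q-p)).map (fun k => (p+k, false))).reverse

lemma wordProd_append (n : ℕ) (w1 w2 : List (ℕ × Bool)) :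
    wordProd n (w1 ++ w2) = wordProd n w1 * wordProd n w2 := by
  simp [wordProd]

lemma wordProd_posW (n p q : ℕ) : wordProd n (posW p q) = δδ n p q := by
  simp only [wordProd, posW, List.map_map, δδ]
  congr 1

lemma wordProd_negW (n p q : ℕ) : wordProd n (negW p q) = (δδ n p q)⁻¹ := by
  simp only [wordProd, negW, List.map_reverse, List.map_map, δδ, List.prod_inv_reverse,
    List.map_map]
  have : ((fun l : ℕ × Bool => if l.2 = true then σ n l.1 else (σ n l.1)⁻¹) ∘ fun k => (p + k, false))
      = ((fun x : BraidGroup n => x⁻¹) ∘ fun k => σ n (p + k)) := by funext k; simp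
  rw [this]

lemma key_lemma {n r p' t : ℕ} (hr : 1 ≤ r) (hrp : r ≤ p') (hpt : p' ≤ t) (htn : t + 2 ≤ n) :
    δδ n (p'+1) (t+1) * σ n (t+1) * (δδ n r (t+1) * σ n (t+1)) =
      δδ n r (t+1) * σ n (t+1) * δδ n p' (t+1) := by
  have e1 : δδ n r (t+1) = δδ n r t * σ n t := δδ_succ (by omega)
  have e2 : δδ n p' (t+1) = δδ n p' t * σ n t := δδ_succ (by omega)
  have c1 : σ n (t+1) * δδ n r t = δδ n r t * σ n (t+1) := σ_comm_δδ (by omega)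
  have c2 : σ n (t+1) * δδ n p' t = δδ n p' t * σ n (t+1) := σ_comm_δδ (by omega)
  have b : σ n t * σ n (t+1) * σ n t = σ n (t+1) * σ n t * σ n (t+1) :=
    braid_rel n (by omega) (by omega)
  have sp : δδ n r (t+1) * δδ n p' t = δδ n (p'+1) (t+1) * δδ n r (t+1) :=
    shift_prod hr hrp (by omega) t (by omega)
  calc δδ n (p'+1) (t+1) * σ n (t+1) * (δδ n r (t+1) * σ n (t+1))
      = δδ n (p'+1) (t+1) * (σ n (t+1) * δδ n r t) * (σ n t * σ n (t+1)) := by rw [e1]; group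
    _ = δδ n (p'+1) (t+1) * δδ n r t * (σ n (t+1) * σ n t * σ n (t+1)) := by rw [c1]; group
    _ = δδ n (p'+1) (t+1) * δδ n r t * (σ n t * σ n (t+1) * σ n t) := by rw [← b]
    _ = δδ n (p'+1) (t+1) * δδ n r (t+1) * (σ n (t+1) * σ n t) := by rw [e1]; group
    _ = δδ n r (t+1) * δδ n p' t * (σ n (t+1) * σ n t) := by rw [← sp]
    _ = δδ n r (t+1) * (σ n (t+1) * δδ n p' t) * σ n t := by rw [c2]; group
    _ = δδ n r (t+1) * σ n (t+1) * δδ n p' (t+1) := by rw [e2]; group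

theorem stmt18 (n p q r : ℕ) (hr : 1 ≤ r) (hrp : r < p) (hpq : p < q) (hqn : q ≤ n) :
    (a n p q)⁻¹ * a n r q =
      δδ n p (q - 1) * δδ n r (p - 1) * a n (p - 1) q * (δδ n r (q - 1))⁻¹ ∧
    SigmaPositive n (q - 1) ((a n p q)⁻¹ * a n r q) := by
  obtain ⟨p', rfl⟩ : ∃ p', p = p' + 1 := ⟨p - 1, by omega⟩
  obtain ⟨t, rfl⟩ : ∃ t, q = t + 2 := ⟨q - 2, by omega⟩
  have hrp' : r ≤ p' := by omega
  have hpt : p' ≤ t := by omega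
  have htn : t + 2 ≤ n := hqn
  have key := key_lemma (n := n) hr hrp' hpt htn
  have hq1 : t + 2 - 1 = t + 1 := rfl
  have hp1 : p' + 1 - 1 = p' := rfl
  set X := δδ n (p'+1) (t+1) with hX
  set R := δδ n r (t+1) with hR
  set P := δδ n p' (t+1) with hP0
  set s := σ n (t+1) with hs
  have hsplit : δδ n r p' * P = R := δδ_split hrp' (by omega)
  have hPkey : P = (R * s)⁻¹ * (X * s * (R * s)) := by rw [key]; group
  have main : (a n (p'+1) (t+2))⁻¹ * a n r (t+2) =
      δδ n (p'+1) (t+2-1) * δδ n r (p'+1-1) * a n (p'+1-1) (t+2) * (δδ n r (t+2-1))⁻¹ := by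
    simp only [a, hq1, hp1, ← hX, ← hR, ← hP0, ← hs]
    rw [show X * δδ n r p' * (P * s * P⁻¹) * R⁻¹
        = X * (δδ n r p' * P) * s * P⁻¹ * R⁻¹ by group, hsplit]
    rw [hPkey]; group
  refine ⟨main, ?_⟩
  rw [main]
  refine ⟨posW (p'+1) (t+1) ++ posW r p' ++ (posW p' (t+1) ++ [(t+1, true)] ++ negW p' (t+1))
      ++ negW r (t+1), ?_, ?_, ?_, ?_⟩
  · show wordProd n _ = _
    simp only [wordProd_append, wordProd_posW, wordProd_negW, a, hq1, hp1]
    have : wordProd n [(t+1, true)] = σ n (t+1) := by simp [wordProd]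
    rw [this]
  · simp
  · intro hmem
    rw [show t + 2 - 1 = t + 1 from rfl] at hmem
    simp only [List.mem_append, posW, negW, List.mem_reverse, List.mem_map, List.mem_range,
      List.mem_singleton, Prod.mk.injEq] at hmem
    rcases hmem with ((h | h) | (h | h) | h) | h <;>
      first
      | (obtain ⟨k, hk, hk2, hk3⟩ := h;
          first | exact Bool.noConfusion hk3 | omega)
      | simp at h
      | omega
  · intro l hl
    rw [show t + 2 - 1 = t + 1 from rfl]
    simp only [List.mem_append, posW, negW, List.mem_reverse, List.mem_map, List.mem_range,
      List.mem_singleton] at hl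
    rcases hl with ((h | h) | (h | h) | h) | h <;>
      first
      | (obtain ⟨k, hk, rfl⟩ := h; simp; omega)
      | (subst h; simp)
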